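/- Strong FWER control (Theorem 1): Under conditions (D1)–(D4) for the multiple decision process Δ and conditions (A1)–(A3) for the multiple decision size function A, for every probability measure P, every q ∈ [0,1], the multiple decision function δ†(q) = (δ_m(A_m(α†(q))) : m ∈ 𝓜) satisfies P(S₀(α†(q)) ≥ 1) ≤ q; that is, the probability of at least one false discovery is at most q. -/

import Mathlib

/-!
Statement 0 (Peña–Habiger–Wu, Theorem 1): Strong FWER control.
Under (D1)–(D4) for the multiple decision process Δ = (δ_m) and (A1)–(A3) for the
multiple decision size function A = (A_m), for every probability measure P and every
q ∈ [0,1], P(S₀(α†(q)) ≥ 1) ≤ q.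
-/

open MeasureTheory ProbabilityTheory Function Set Filter Topology

noncomputable section

/-- The number of false discoveries `S₀(α) = ∑_{m ∈ 𝓜₀} δ_m(A_m(α))`. -/
def Szero {X ι : Type*} [Fintype ι] (M0 : Finset ι) (A : ι → ℝ → ℝ)
    (δ : ι → ℝ → X → ℝ) (α : ℝ) (x : X) : ℝ :=
  ∑ m ∈ M0, δ m (A m α) x

/-- The process `H₁(α) = ∏_{m ∈ 𝓜} (1 - A_m(α))^{1 - δ_m(A_m(α)-)}`, where
`δ_m(A_m(α)-)` denotes the left-hand limit of the path `β ↦ δ_m(β)` at `A_m(α)`. -/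
def Hone {X ι : Type*} [Fintype ι] (A : ι → ℝ → ℝ)
    (δ : ι → ℝ → X → ℝ) (α : ℝ) (x : X) : ℝ :=
  ∏ m, (1 - A m α) ^ (1 - Function.leftLim (fun β => δ m β x) (A m α))

/-- The first crossing time `α†(q) = inf {α ∈ [0,1] : H₁(α) < 1 - q}` (with `inf ∅ = 1`). -/
def alphaDag {X ι : Type*} [Fintype ι] (A : ι → ℝ → ℝ)
    (δ : ι → ℝ → X → ℝ) (q : ℝ) (x : X) : ℝ :=
  sInf ({α ∈ Set.Icc (0:ℝ) 1 | Hone A δ α x < 1 - q} ∪ {1})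

/-- The σ-algebra generated by the decision process `α ↦ δ_m(α)`, `α ∈ [0,1]`. -/
def procSigma {X : Type*} (δm : ℝ → X → ℝ) : MeasurableSpace X :=
  ⨆ α ∈ Set.Icc (0:ℝ) 1, MeasurableSpace.comap (δm α) Real.measurableSpace

/-- Deterministic threshold. -/
def tstar {ι : Type*} (M0 : Finset ι) (A : ι → ℝ → ℝ) (q : ℝ) : ℝ :=
  sSup {α ∈ Set.Icc (0:ℝ) 1 | 1 - q ≤ ∏ m ∈ M0, (1 - A m α)}

lemma tstar_spec {ι : Type*} (M0 : Finset ι) (A : ι → ℝ → ℝ) (q : ℝ)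
    (hq : q ∈ Set.Icc (0:ℝ) 1)
    (hA10 : ∀ m : ι, A m 0 = 0)
    (hA2c : ∀ m : ι, ContinuousOn (A m) (Set.Icc 0 1)) :
    tstar M0 A q ∈ Set.Icc (0:ℝ) 1 ∧
      (1 - q ≤ ∏ m ∈ M0, (1 - A m (tstar M0 A q))) ∧
      ∀ τ ∈ Set.Icc (0:ℝ) 1, 1 - q ≤ ∏ m ∈ M0, (1 - A m τ) → τ ≤ tstar M0 A q := by
  set G : ℝ → ℝ := fun α => ∏ m ∈ M0, (1 - A m α) with hGdef
  have hGcont : ContinuousOn G (Set.Icc (0:ℝ) 1) := by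
    intro y hy
    exact tendsto_finset_prod _ (fun m _ => (continuousOn_const.sub (hA2c m)) y hy)
  have hTeq : {α ∈ Set.Icc (0:ℝ) 1 | 1 - q ≤ G α}
      = Set.Icc (0:ℝ) 1 ∩ G ⁻¹' (Set.Ici (1-q)) := rfl
  have hcl : IsClosed {α ∈ Set.Icc (0:ℝ) 1 | 1 - q ≤ G α} := by
    rw [hTeq]
    exact hGcont.preimage_isClosed_of_isClosed isClosed_Icc isClosed_Ici
  have hcp : IsCompact {α ∈ Set.Icc (0:ℝ) 1 | 1 - q ≤ G α} :=
    IsCompact.of_isClosed_subset isCompact_Icc hcl (fun α hα => hα.1)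
  have h0mem : (0:ℝ) ∈ {α ∈ Set.Icc (0:ℝ) 1 | 1 - q ≤ G α} := by
    refine ⟨⟨le_refl 0, zero_le_one⟩, ?_⟩
    have : G 0 = 1 := by
      simp [hGdef, hA10]
    rw [this]; linarith [hq.1]
  have hmem := hcp.sSup_mem ⟨0, h0mem⟩
  exact ⟨hmem.1, hmem.2, fun τ hτ hGτ => le_csSup hcp.bddAbove ⟨hτ, hGτ⟩⟩

lemma pathwise {X ι : Type*} [Fintype ι] [DecidableEq ι] (M0 M1 : Finset ι)
    (hpart : M0 ∪ M1 = Finset.univ) (hdisj : Disjoint M0 M1)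
    (δ : ι → ℝ → X → ℝ) (A : ι → ℝ → ℝ) (x : X)
    (hvals : ∀ m, ∀ α ∈ Set.Icc (0:ℝ) 1, δ m α x = 0 ∨ δ m α x = 1)
    (honex : ∀ m, δ m 1 x = 1)
    (hmono : ∀ m, MonotoneOn (fun α => δ m α x) (Set.Icc 0 1))
    (hrc : ∀ m, ∀ α ∈ Set.Ico (0:ℝ) 1, ContinuousWithinAt (fun β => δ m β x) (Set.Ici α) α)
    (hArange : ∀ m, ∀ α ∈ Set.Icc (0:ℝ) 1, A m α ∈ Set.Icc (0:ℝ) 1)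
    (hA1 : ∀ m, A m 0 = 0 ∧ A m 1 = 1)
    (hA2 : ∀ m, ContinuousOn (A m) (Set.Icc 0 1) ∧ StrictMonoOn (A m) (Set.Icc 0 1))
    (q : ℝ) (hq : q ∈ Set.Icc (0:ℝ) 1)
    (hS : 1 ≤ Szero M0 A δ (alphaDag A δ q x) x) :
    ∃ m ∈ M0, δ m (A m (tstar M0 A q)) x = 1 := by
  classical
  obtain ⟨hq0, hq1⟩ := hq
  set V : ι → ℝ := fun m => sInf {β | β ∈ Set.Icc (0:ℝ) 1 ∧ δ m β x = 1} with hVdef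
  have hSne : ∀ m, (1:ℝ) ∈ {β | β ∈ Set.Icc (0:ℝ) 1 ∧ δ m β x = 1} :=
    fun m => ⟨⟨zero_le_one, le_refl 1⟩, honex m⟩
  have hSbdd : ∀ m, BddBelow {β | β ∈ Set.Icc (0:ℝ) 1 ∧ δ m β x = 1} :=
    fun m => ⟨0, fun β hβ => hβ.1.1⟩
  have hV0 : ∀ m, 0 ≤ V m := fun m => le_csInf ⟨1, hSne m⟩ (fun b hb => hb.1.1)
  have hV1 : ∀ m, V m ≤ 1 := fun m => csInf_le (hSbdd m) (hSne m)
  -- δ = 1 strictly after V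
  have hδ_of_lt : ∀ m γ, V m < γ → γ ≤ 1 → δ m γ x = 1 := by
    intro m γ hlt hγ1
    obtain ⟨s, hs, hsγ⟩ := exists_lt_of_csInf_lt ⟨1, hSne m⟩ hlt
    have hγIcc : γ ∈ Set.Icc (0:ℝ) 1 := ⟨le_of_lt (lt_of_le_of_lt (hV0 m) hlt), hγ1⟩
    have hle2 : δ m s x ≤ δ m γ x := hmono m hs.1 hγIcc hsγ.le
    have hs2 : δ m s x = 1 := hs.2
    rcases hvals m γ hγIcc with h | h
    · exfalso; rw [hs2] at hle2; rw [h] at hle2; linarith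
    · exact h
  -- characterization
  have hδ_iff : ∀ m, ∀ β ∈ Set.Icc (0:ℝ) 1, (δ m β x = 1 ↔ V m ≤ β) := by
    intro m β hβ
    constructor
    · intro h; exact csInf_le (hSbdd m) ⟨hβ, h⟩
    · intro hVβ
      rcases eq_or_lt_of_le hβ.2 with hβ1 | hβ1
      · rw [hβ1]; exact honex m
      rcases eq_or_lt_of_le hVβ with hVeq | hVlt
      · have hc := hrc m β ⟨hβ.1, hβ1⟩
        have h1 : Tendsto (fun γ => δ m γ x) (𝓝[>] β) (𝓝 (δ m β x)) :=
          hc.tendsto.mono_left (nhdsWithin_mono β Ioi_subset_Ici_self)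
        have h2 : Tendsto (fun γ => δ m γ x) (𝓝[>] β) (𝓝 1) := by
          apply Tendsto.congr' _ tendsto_const_nhds
          filter_upwards [Ioo_mem_nhdsGT_of_mem ⟨le_refl β, hβ1⟩] with γ hγ
          exact (hδ_of_lt m γ (by rw [← hVeq] at hγ; exact hγ.1) hγ.2.le).symm
        exact tendsto_nhds_unique h1 h2
      · exact hδ_of_lt m β hVlt hβ.2
  have hδ0 : ∀ m, ∀ β ∈ Set.Icc (0:ℝ) 1, β < V m → δ m β x = 0 := by
    intro m β hβ hlt
    rcases hvals m β hβ with h | h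
    · exact h
    · exact absurd ((hδ_iff m β hβ).1 h) (not_le.2 hlt)
  -- left limits
  have hll1 : ∀ m β, V m < β → β ≤ 1 → Function.leftLim (fun γ => δ m γ x) β = 1 := by
    intro m β hVβ hβ1
    apply leftLim_eq_of_tendsto
    apply Tendsto.congr' _ tendsto_const_nhds
    filter_upwards [Ioo_mem_nhdsLT_of_mem ⟨hVβ, le_refl β⟩] with γ hγ
    exact (hδ_of_lt m γ hγ.1 (hγ.2.le.trans hβ1)).symm
  have hll0 : ∀ m β, 0 < β → β ≤ 1 → β ≤ V m → Function.leftLim (fun γ => δ m γ x) β = 0 := by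
    intro m β hβ0 hβ1 hβV
    apply leftLim_eq_of_tendsto
    apply Tendsto.congr' _ tendsto_const_nhds
    filter_upwards [Ioo_mem_nhdsLT_of_mem ⟨hβ0, le_refl β⟩] with γ hγ
    exact (hδ0 m γ ⟨hγ.1.le, hγ.2.le.trans hβ1⟩ (lt_of_lt_of_le hγ.2 hβV)).symm
  -- product formula for Hone
  set g : ι → ℝ → ℝ := fun m α => if V m < A m α then 1 else 1 - A m α with hgdef
  have hHg : ∀ α ∈ Set.Icc (0:ℝ) 1, Hone A δ α x = ∏ m, g m α := by
    intro α hα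
    unfold Hone
    refine Finset.prod_congr rfl (fun m _ => ?_)
    have hβ := hArange m α hα
    rcases eq_or_lt_of_le hβ.1 with hβ0 | hβ0
    · have hg1 : g m α = 1 - A m α := if_neg (not_lt.2 (by rw [← hβ0]; exact hV0 m))
      rw [hg1, ← hβ0]
      simp [Real.one_rpow]
    · by_cases hVβ : V m < A m α
      · have hg1 : g m α = 1 := if_pos hVβ
        rw [hg1, hll1 m (A m α) hVβ hβ.2]
        simp [Real.rpow_zero]
      · push_neg at hVβ
        have hg1 : g m α = 1 - A m α := if_neg (not_lt.2 hVβ)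
        rw [hg1, hll0 m (A m α) hβ0 hβ.2 hVβ]
        simp [Real.rpow_one]
  have hg01 : ∀ m, ∀ α ∈ Set.Icc (0:ℝ) 1, 0 ≤ g m α ∧ g m α ≤ 1 := by
    intro m α hα
    have hβ := hArange m α hα
    by_cases h : V m < A m α
    · have hg1 : g m α = 1 := if_pos h
      rw [hg1]; exact ⟨zero_le_one, le_refl 1⟩
    · have hg1 : g m α = 1 - A m α := if_neg h
      rw [hg1]; constructor <;> linarith [hβ.1, hβ.2]
  -- α†
  set ad := alphaDag A δ q x with haddef
  have h_bdd : BddBelow ({α ∈ Set.Icc (0:ℝ) 1 | Hone A δ α x < 1 - q} ∪ {1}) := by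
    refine ⟨0, ?_⟩
    rintro β (hβ | hβ)
    · exact hβ.1.1
    · rw [Set.mem_singleton_iff] at hβ; rw [hβ]; exact zero_le_one
  have had0 : 0 ≤ ad := le_csInf ⟨1, Or.inr rfl⟩ (by
    rintro β (hβ | hβ)
    · exact hβ.1.1
    · rw [Set.mem_singleton_iff] at hβ; rw [hβ]; exact zero_le_one)
  have had1 : ad ≤ 1 := csInf_le h_bdd (Or.inr rfl)
  have hadIcc : ad ∈ Set.Icc (0:ℝ) 1 := ⟨had0, had1⟩
  -- extract a rejected null
  have hm0 : ∃ m ∈ M0, δ m (A m ad) x = 1 := by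
    by_contra h
    push_neg at h
    have hz : Szero M0 A δ ad x = 0 :=
      Finset.sum_eq_zero (fun m hm => (hvals m _ (hArange m ad hadIcc)).resolve_right (h m hm))
    rw [hz] at hS; linarith
  obtain ⟨m₀, hm₀, hδm₀⟩ := hm0
  -- W m
  set W : ι → ℝ := fun m => sInf {α | α ∈ Set.Icc (0:ℝ) 1 ∧ V m ≤ A m α} with hWdef
  have hWbdd : ∀ m, BddBelow {α | α ∈ Set.Icc (0:ℝ) 1 ∧ V m ≤ A m α} :=
    fun m => ⟨0, fun β hβ => hβ.1.1⟩
  have hWmem : ∀ m, W m ∈ Set.Icc (0:ℝ) 1 ∧ V m ≤ A m (W m) := by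
    intro m
    have hTeq : {α | α ∈ Set.Icc (0:ℝ) 1 ∧ V m ≤ A m α}
        = Set.Icc (0:ℝ) 1 ∩ (A m) ⁻¹' (Set.Ici (V m)) := rfl
    have hcl : IsClosed {α | α ∈ Set.Icc (0:ℝ) 1 ∧ V m ≤ A m α} := by
      rw [hTeq]
      exact (hA2 m).1.preimage_isClosed_of_isClosed isClosed_Icc isClosed_Ici
    have hcp := IsCompact.of_isClosed_subset isCompact_Icc hcl (fun α hα => hα.1)
    have hne : {α | α ∈ Set.Icc (0:ℝ) 1 ∧ V m ≤ A m α}.Nonempty :=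
      ⟨1, ⟨⟨zero_le_one, le_refl 1⟩, by rw [(hA1 m).2]; exact hV1 m⟩⟩
    have hmem := hcp.sInf_mem hne
    exact ⟨hmem.1, hmem.2⟩
  have hWlt : ∀ m, ∀ α ∈ Set.Icc (0:ℝ) 1, α < W m → A m α < V m := by
    intro m α hα hlt
    by_contra h
    push_neg at h
    exact absurd (csInf_le (hWbdd m) ⟨hα, h⟩) (not_le.2 hlt)
  have hAW : ∀ m, A m (W m) = V m := by
    intro m
    refine le_antisymm ?_ (hWmem m).2
    by_contra h
    push_neg at h
    rcases eq_or_lt_of_le (hWmem m).1.1 with hW0 | hWpos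
    · rw [← hW0, (hA1 m).1] at h
      exact absurd h (not_lt.2 (hV0 m))
    · have hAt : Tendsto (A m) (𝓝[<] W m) (𝓝 (A m (W m))) := by
        have h1 : 𝓝[Set.Ioo (0:ℝ) (W m)] (W m) = 𝓝[<] (W m) :=
          nhdsWithin_Ioo_eq_nhdsLT hWpos
        refine ((hA2 m).1 (W m) (hWmem m).1).tendsto.mono_left ?_
        rw [← h1]
        exact nhdsWithin_mono _ (fun α hα => ⟨hα.1.le, hα.2.le.trans (hWmem m).1.2⟩)
      have hev : ∀ᶠ α in 𝓝[<] W m, V m < A m α := hAt.eventually_const_lt h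
      have hIoo : Set.Ioo (0:ℝ) (W m) ∈ 𝓝[<] W m :=
        Ioo_mem_nhdsLT_of_mem ⟨hWpos, le_refl _⟩
      obtain ⟨α, hα1, hα2⟩ := (hev.and (eventually_of_mem hIoo (fun y hy => hy))).exists
      exact absurd (hWlt m α ⟨hα2.1.le, hα2.2.le.trans (hWmem m).1.2⟩ hα2.2)
        (not_lt.2 hα1.le)
  -- the first null crossing
  obtain ⟨m₁, hm₁M, hm₁min⟩ := Finset.exists_min_image M0 W ⟨m₀, hm₀⟩
  set τ := W m₁ with hτdef
  have hτIcc : τ ∈ Set.Icc (0:ℝ) 1 := (hWmem m₁).1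
  have hτad : τ ≤ ad := by
    refine le_trans (hm₁min m₀ hm₀) (csInf_le (hWbdd m₀) ⟨hadIcc, ?_⟩)
    exact (hδ_iff m₀ _ (hArange m₀ ad hadIcc)).1 hδm₀
  -- Hone at τ is at least 1 - q
  have hHτ : 1 - q ≤ Hone A δ τ x := by
    rcases eq_or_lt_of_le hτad with heq | hlt
    · by_contra hcon
      push_neg at hcon
      rcases eq_or_lt_of_le hτIcc.1 with hτ0 | hτpos
      · have hH1 : Hone A δ τ x = 1 := by
          rw [hHg τ hτIcc]
          refine Finset.prod_eq_one (fun m _ => ?_)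
          have hA0 : A m τ = 0 := by rw [← hτ0]; exact (hA1 m).1
          have hg1 : g m τ = 1 - A m τ := if_neg (not_lt.2 (by rw [hA0]; exact hV0 m))
          rw [hg1, hA0]; ring
        rw [hH1] at hcon; linarith
      · have hAt : ∀ m, Tendsto (A m) (𝓝[<] τ) (𝓝 (A m τ)) := by
          intro m
          have h1 : 𝓝[Set.Ioo (0:ℝ) τ] τ = 𝓝[<] τ := nhdsWithin_Ioo_eq_nhdsLT hτpos
          refine ((hA2 m).1 τ hτIcc).tendsto.mono_left ?_
          rw [← h1]
          exact nhdsWithin_mono _ (fun α hα => ⟨hα.1.le, hα.2.le.trans hτIcc.2⟩)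
        have hfac : ∀ m : ι, Tendsto (fun α => g m α) (𝓝[<] τ) (𝓝 (g m τ)) := by
          intro m
          by_cases hc : V m < A m τ
          · have hev : ∀ᶠ α in 𝓝[<] τ, (1:ℝ) = g m α := by
              filter_upwards [(hAt m).eventually_const_lt hc] with α hα
              exact (if_pos hα).symm
            have hgτ : g m τ = 1 := if_pos hc
            rw [hgτ]
            exact Tendsto.congr' hev tendsto_const_nhds
          · push_neg at hc
            have hev : ∀ᶠ α in 𝓝[<] τ, (1 - A m α) = g m α := by
              filter_upwards [Ioo_mem_nhdsLT_of_mem ⟨hτpos, le_refl τ⟩] with α hα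
              have hlt2 : A m α < A m τ :=
                (hA2 m).2 ⟨hα.1.le, hα.2.le.trans hτIcc.2⟩ hτIcc hα.2
              exact (if_neg (not_lt.2 (le_of_lt (lt_of_lt_of_le hlt2 hc)))).symm
            have hgτ : g m τ = 1 - A m τ := if_neg (not_lt.2 hc)
            rw [hgτ]
            exact Tendsto.congr' hev (tendsto_const_nhds.sub (hAt m))
        have hHt : Tendsto (fun α => Hone A δ α x) (𝓝[<] τ) (𝓝 (Hone A δ τ x)) := by
          have h1 : Tendsto (fun α => ∏ m, g m α) (𝓝[<] τ) (𝓝 (∏ m, g m τ)) :=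
            tendsto_finset_prod _ (fun m _ => hfac m)
          rw [hHg τ hτIcc]
          refine h1.congr' ?_
          filter_upwards [Ioo_mem_nhdsLT_of_mem ⟨hτpos, le_refl τ⟩] with α hα
          exact (hHg α ⟨hα.1.le, hα.2.le.trans hτIcc.2⟩).symm
        have hev2 : ∀ᶠ α in 𝓝[<] τ, Hone A δ α x < 1 - q := hHt.eventually_lt_const hcon
        obtain ⟨α, hα1, hα2⟩ :=
          (hev2.and (eventually_of_mem (Ioo_mem_nhdsLT_of_mem ⟨hτpos, le_refl τ⟩)
            (fun y hy => hy))).exists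
        have hadle : ad ≤ α :=
          csInf_le h_bdd (Or.inl ⟨⟨hα2.1.le, hα2.2.le.trans hτIcc.2⟩, hα1⟩)
        rw [← heq] at hadle
        linarith [hα2.2]
    · by_contra hcon
      push_neg at hcon
      have : ad ≤ τ := csInf_le h_bdd (Or.inl ⟨hτIcc, hcon⟩)
      linarith
  -- bound the null product
  have hGτ : 1 - q ≤ ∏ m ∈ M0, (1 - A m τ) := by
    have h1 : Hone A δ τ x = (∏ m ∈ M0, g m τ) * (∏ m ∈ M1, g m τ) := by
      rw [hHg τ hτIcc, ← Finset.prod_union hdisj, hpart]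
    have hM0g : ∀ m ∈ M0, g m τ = 1 - A m τ := by
      intro m hm
      rcases eq_or_lt_of_le (hm₁min m hm) with he | hl
      · have hAe : A m τ = V m := by rw [he]; exact hAW m
        exact if_neg (not_lt.2 hAe.le)
      · exact if_neg (not_lt.2 (hWlt m τ hτIcc hl).le)
    have hM1le : ∏ m ∈ M1, g m τ ≤ 1 :=
      Finset.prod_le_one (fun m _ => (hg01 m τ hτIcc).1) (fun m _ => (hg01 m τ hτIcc).2)
    have hM0nn : 0 ≤ ∏ m ∈ M0, g m τ :=
      Finset.prod_nonneg (fun m _ => (hg01 m τ hτIcc).1)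
    have hM0eq : ∏ m ∈ M0, g m τ = ∏ m ∈ M0, (1 - A m τ) := Finset.prod_congr rfl hM0g
    calc 1 - q ≤ Hone A δ τ x := hHτ
      _ = (∏ m ∈ M0, g m τ) * (∏ m ∈ M1, g m τ) := h1
      _ ≤ (∏ m ∈ M0, g m τ) * 1 := mul_le_mul_of_nonneg_left hM1le hM0nn
      _ = ∏ m ∈ M0, (1 - A m τ) := by rw [mul_one, hM0eq]
  -- conclude
  obtain ⟨htIcc, _, hle⟩ := tstar_spec M0 A q ⟨hq0, hq1⟩ (fun m => (hA1 m).1)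
    (fun m => (hA2 m).1)
  have hτt : τ ≤ tstar M0 A q := hle τ hτIcc hGτ
  refine ⟨m₁, hm₁M, ?_⟩
  apply (hδ_iff m₁ _ (hArange m₁ _ htIcc)).2
  calc V m₁ = A m₁ τ := (hAW m₁).symm
    _ ≤ A m₁ (tstar M0 A q) := (hA2 m₁).2.monotoneOn hτIcc htIcc hτt

/-- **Theorem 1 (strong FWER control).** -/
theorem fwer_strong_control
    {X ι : Type*} [MeasurableSpace X] [Fintype ι] [DecidableEq ι] [Nonempty ι]
    (P : Measure X) [IsProbabilityMeasure P]
    -- the partition 𝓜 = 𝓜₀(P) ∪ 𝓜₁(P)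
    (M0 M1 : Finset ι) (hpart : M0 ∪ M1 = Finset.univ) (hdisj : Disjoint M0 M1)
    -- the multiple decision process Δ and the size function A
    (δ : ι → ℝ → X → ℝ) (A : ι → ℝ → ℝ)
    (hmeas : ∀ m, ∀ α ∈ Set.Icc (0:ℝ) 1, Measurable (δ m α))
    (hvals : ∀ m, ∀ α ∈ Set.Icc (0:ℝ) 1, ∀ x, δ m α x = 0 ∨ δ m α x = 1)
    -- (D1)
    (hD1 : ∀ m, ∀ᵐ x ∂P, δ m 0 x = 0 ∧ δ m 1 x = 1)
    -- (D2): nondecreasing right-continuous {0,1}-valued paths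
    (hD2 : ∀ᵐ x ∂P, ∀ m, MonotoneOn (fun α => δ m α x) (Set.Icc 0 1) ∧
      ∀ α ∈ Set.Ico (0:ℝ) 1, ContinuousWithinAt (fun β => δ m β x) (Set.Ici α) α)
    -- (D3): the null and alternative families are independent of each other,
    -- and the null processes are mutually independent
    (hD3a : Indep (⨆ m ∈ M0, procSigma (δ m)) (⨆ m ∈ M1, procSigma (δ m)) P)
    (hD3b : iIndep (fun m : {m // m ∈ M0} => procSigma (δ (m : ι))) P)
    -- (D4): each null decision function has exact size α
    (hD4 : ∀ m ∈ M0, ∀ α ∈ Set.Icc (0:ℝ) 1, ∫ x, δ m α x ∂P = α)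
    -- (A1)–(A3)
    (hArange : ∀ m, ∀ α ∈ Set.Icc (0:ℝ) 1, A m α ∈ Set.Icc (0:ℝ) 1)
    (hA1 : ∀ m, A m 0 = 0 ∧ A m 1 = 1)
    (hA2 : ∀ m, ContinuousOn (A m) (Set.Icc 0 1) ∧ StrictMonoOn (A m) (Set.Icc 0 1))
    (hA3 : ∀ α ∈ Set.Icc (0:ℝ) 1, 1 - α ≤ ∏ m, (1 - A m α))
    (q : ℝ) (hq : q ∈ Set.Icc (0:ℝ) 1) :
    P {x | 1 ≤ Szero M0 A δ (alphaDag A δ q x) x} ≤ ENNReal.ofReal q := by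
  classical
  obtain ⟨htIcc, htG, _⟩ := tstar_spec M0 A q hq (fun m => (hA1 m).1) (fun m => (hA2 m).1)
  set t := tstar M0 A q with htdef
  set B : ι → Set X := fun m => {x | δ m (A m t) x = 1} with hBdef
  have hAt : ∀ m, A m t ∈ Set.Icc (0:ℝ) 1 := fun m => hArange m t htIcc
  have hBmeas : ∀ m, MeasurableSet (B m) := fun m =>
    (hmeas m _ (hAt m)) (measurableSet_singleton 1)
  -- a.e. inclusion into the union of null rejections at level t
  have hae : {x | 1 ≤ Szero M0 A δ (alphaDag A δ q x) x} ≤ᵐ[P] ⋃ m ∈ M0, B m := by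
    have h1 : ∀ᵐ x ∂P, ∀ m, δ m 1 x = 1 :=
      ae_all_iff.2 (fun m => (hD1 m).mono (fun x h => h.2))
    filter_upwards [h1, hD2] with x hx1 hx2
    intro hxS
    obtain ⟨m, hm, hmx⟩ := pathwise M0 M1 hpart hdisj δ A x
      (fun m' α hα => hvals m' α hα x) hx1 (fun m' => (hx2 m').1) (fun m' => (hx2 m').2)
      hArange hA1 hA2 q hq hxS
    exact Set.mem_biUnion hm hmx
  -- measurability of the intersection of complements
  have hInterMeas : MeasurableSet (⋂ m ∈ M0, (B m)ᶜ) :=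
    MeasurableSet.biInter (M0 : Set ι).to_countable (fun m _ => (hBmeas m).compl)
  have hIcompl : (⋃ m ∈ M0, B m) = (⋂ m ∈ M0, (B m)ᶜ)ᶜ := by
    rw [← compl_compl (⋃ m ∈ M0, B m), Set.compl_iUnion₂]
  -- each complement is procSigma-measurable
  have hBproc : ∀ m, MeasurableSet[procSigma (δ m)] ((B m)ᶜ) := by
    intro m
    have h1 : MeasurableSet[MeasurableSpace.comap (δ m (A m t)) Real.measurableSpace]
        ((B m)ᶜ) := by
      refine ⟨({1} : Set ℝ)ᶜ, (measurableSet_singleton 1).compl, ?_⟩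
      ext y; simp [hBdef]
    have h2 : MeasurableSpace.comap (δ m (A m t)) Real.measurableSpace ≤ procSigma (δ m) :=
      le_iSup₂ (f := fun (α : ℝ) (_ : α ∈ Set.Icc (0:ℝ) 1) =>
        MeasurableSpace.comap (δ m α) Real.measurableSpace) (A m t) (hAt m)
    exact h2 _ h1
  -- independence product rule
  have hindep := (iIndep_iff _ P).1 hD3b (Finset.univ : Finset {m // m ∈ M0})
    (f := fun i : {m // m ∈ M0} => (B (i : ι))ᶜ) (fun i _ => hBproc i)
  have hsets : (⋂ i ∈ (Finset.univ : Finset {m // m ∈ M0}), (B (i : ι))ᶜ)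
      = ⋂ m ∈ M0, (B m)ᶜ := by
    ext y
    simp only [Set.mem_iInter, Finset.mem_univ, forall_const, Set.mem_compl_iff]
    exact ⟨fun h m hm => h ⟨m, hm⟩, fun h i => h i i.2⟩
  -- individual probabilities
  have hPB : ∀ m ∈ M0, P (B m) = ENNReal.ofReal (A m t) := by
    intro m hm
    have hind : δ m (A m t) = (B m).indicator (1 : X → ℝ) := by
      funext y
      simp only [Set.indicator_apply, Pi.one_apply]
      split_ifs with hy
      · exact hy
      · exact (hvals m _ (hAt m) y).resolve_right hy
    have h4 := hD4 m hm (A m t) (hAt m)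
    rw [hind] at h4
    rw [integral_indicator_one (hBmeas m)] at h4
    rw [← h4, ofReal_measureReal (measure_ne_top P _)]
  have hPBc : ∀ m ∈ M0, P ((B m)ᶜ) = ENNReal.ofReal (1 - A m t) := by
    intro m hm
    rw [prob_compl_eq_one_sub (hBmeas m), hPB m hm,
      ENNReal.ofReal_sub 1 (hAt m).1, ENNReal.ofReal_one]
  -- probability of the intersection
  have hInter : P (⋂ m ∈ M0, (B m)ᶜ) = ENNReal.ofReal (∏ m ∈ M0, (1 - A m t)) := by
    rw [← hsets, hindep,
      ENNReal.ofReal_prod_of_nonneg (fun m hm => sub_nonneg.2 (hAt m).2),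
      ← Finset.prod_coe_sort M0 (fun m => ENNReal.ofReal (1 - A m t))]
    exact Finset.prod_congr rfl (fun i _ => hPBc i i.2)
  have hfinal : (1 : ENNReal) - ENNReal.ofReal (1 - q) = ENNReal.ofReal q := by
    have h1 : ENNReal.ofReal (1 - (1 - q)) = ENNReal.ofReal 1 - ENNReal.ofReal (1 - q) :=
      ENNReal.ofReal_sub _ (by linarith [hq.2])
    rw [ENNReal.ofReal_one] at h1
    rw [← h1]
    norm_num
  calc P {x | 1 ≤ Szero M0 A δ (alphaDag A δ q x) x}
      ≤ P (⋃ m ∈ M0, B m) := measure_mono_ae hae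
    _ = 1 - P (⋂ m ∈ M0, (B m)ᶜ) := by rw [hIcompl, prob_compl_eq_one_sub hInterMeas]
    _ = 1 - ENNReal.ofReal (∏ m ∈ M0, (1 - A m t)) := by rw [hInter]
    _ ≤ 1 - ENNReal.ofReal (1 - q) := tsub_le_tsub_left (ENNReal.ofReal_le_ofReal htG) 1
    _ = ENNReal.ofReal q := hfinal

end
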